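/- For Re(z) > −2 and complex w, the double integral ∫₀^∞ ∫₀^∞ u^z v^z e^{−v²(u²+1)} sin(wv) sinh(wuv) du dv equals (π w/4) Γ(1 + z/2) erf(w/2) ₁F₁(1 + z/2; 3/2; w²/4). -/

import Mathlib

open Real MeasureTheory Set

/-- Pochhammer symbol `(a)_n`. -/
noncomputable def poch (a : ℂ) (n : ℕ) : ℂ := ∏ i ∈ Finset.range n, (a + i)

/-- Confluent hypergeometric function `₁F₁(a;c;z)`. -/
noncomputable def hyp1F1 (a c z : ℂ) : ℂ :=
  ∑' n : ℕ, poch a n / poch c n * z ^ n / (n.factorial : ℂ)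

/-- The error function extended to complex argument via its entire power series. -/
noncomputable def cerf (w : ℂ) : ℂ :=
  (2 / (Real.sqrt π : ℂ)) * ∑' n : ℕ, (-1)^n * w^(2*n+1) / ((n.factorial : ℂ) * (2*n+1))

lemma sq_cpow (x : ℝ) (hx : 0 < x) (w : ℂ) : ((x^2 : ℝ) : ℂ)^w = (x:ℂ)^(2*w) := by
  have hlog : Complex.log ((x:ℝ):ℂ) = (Real.log x : ℂ) := (Complex.ofReal_log hx.le).symm
  rw [show ((2:ℂ)*w) = (2:ℂ)*w from rfl, Complex.cpow_mul]
  · congr 1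
    rw [show ((x^2 : ℝ):ℂ) = ((x:ℂ))^(2:ℕ) by push_cast; ring, ← Complex.cpow_natCast]
    norm_num
  · rw [hlog]; simp [Real.pi_pos]
  · rw [hlog]; simp [Real.pi_pos.le]

lemma gauss_cpow (s : ℂ) (hs : 0 < s.re) :
    ∫ t in Ioi (0:ℝ), (t:ℂ)^(s-1) * (Real.exp (-t^2) : ℂ) = Complex.Gamma (s/2) / 2 := by
  have h2 : (0:ℝ) < 2 := by norm_num
  have key := integral_comp_rpow_Ioi_of_pos
    (g := fun y : ℝ => ((Real.exp (-y) : ℝ) : ℂ) * (y:ℂ)^(s/2-1)) h2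
  have heq : ∀ x ∈ Ioi (0:ℝ),
      ((2:ℝ) * x ^ ((2:ℝ)-1)) • (((Real.exp (-(x^(2:ℝ))) : ℝ) : ℂ) * ((x^(2:ℝ):ℝ):ℂ)^(s/2-1))
      = (2:ℝ) • ((x:ℂ)^(s-1) * (Real.exp (-x^2) : ℂ)) := by
    intro x hx
    have hx0 : (0:ℝ) < x := hx
    have hrp : x ^ (2:ℝ) = x^2 := by rw [← Real.rpow_natCast x 2]; norm_num
    have hrp1 : x ^ ((2:ℝ)-1) = x := by norm_num
    rw [hrp, hrp1, sq_cpow x hx0]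
    have hxne : (x:ℂ) ≠ 0 := by exact_mod_cast hx0.ne'
    have h1 : (x:ℂ)^(s-1) = (x:ℂ)^(1:ℂ) * (x:ℂ)^(2*(s/2-1)) := by
      rw [← Complex.cpow_add _ _ hxne]; congr 1; ring
    rw [h1, Complex.cpow_one, Complex.real_smul, Complex.real_smul]
    push_cast
    ring
  rw [setIntegral_congr_fun measurableSet_Ioi heq] at key
  rw [integral_smul] at key
  have hG : Complex.Gamma (s/2) = ∫ y in Ioi (0:ℝ), ((Real.exp (-y) : ℝ) : ℂ) * (y:ℂ)^(s/2-1) := by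
    rw [Complex.Gamma_eq_integral (by simpa using by positivity : 0 < (s/2).re)]
    rfl
  rw [← hG] at key
  have := key
  rw [show ((2:ℝ) • (∫ t in Ioi (0:ℝ), (t:ℂ)^(s-1) * (Real.exp (-t^2) : ℂ))) =
    (2:ℂ) * ∫ t in Ioi (0:ℝ), (t:ℂ)^(s-1) * (Real.exp (-t^2) : ℂ) by
      rw [Complex.real_smul]; norm_num] at this
  field_simp [eq_comm] at this ⊢
  linear_combination this

lemma cpowIoiCont (a : ℂ) : ContinuousOn (fun t : ℝ => (t:ℂ)^a) (Ioi 0) := by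
  apply continuousOn_of_forall_continuousAt
  intro x hx
  exact Complex.continuousAt_ofReal_cpow_const x a (Or.inr (ne_of_gt hx))

lemma term_norm (a : ℂ) (c : ℂ) (n : ℕ) (t : ℝ) (ht : 0 < t) :
    ‖c * ((t:ℂ)^a * (Real.exp (-t^2) : ℂ) * (t:ℂ)^(2*n+1 : ℕ))‖
      = ‖c‖ * (t ^ (a.re + (2*n+1 : ℕ)) * Real.exp (-1 * t^2)) := by
  rw [norm_mul, norm_mul, norm_mul]
  rw [Complex.norm_cpow_eq_rpow_re_of_pos ht]
  have h1 : ‖((Real.exp (-t^2) : ℝ) : ℂ)‖ = Real.exp (-t^2) := by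
    rw [Complex.norm_real, Real.norm_eq_abs, abs_of_pos (Real.exp_pos _)]
  have h2 : ‖((t:ℂ))^(2*n+1 : ℕ)‖ = t ^ ((2*n+1 : ℕ) : ℝ) := by
    rw [norm_pow, Complex.norm_real, Real.norm_eq_abs, abs_of_pos ht, ← Real.rpow_natCast]
  rw [h1, h2, Real.rpow_add ht, neg_one_mul]
  ring

lemma term_integrable (a : ℂ) (ha : -2 < a.re) (c : ℂ) (n : ℕ) :
    IntegrableOn (fun t : ℝ => c * ((t:ℂ)^a * (Real.exp (-t^2) : ℂ) * (t:ℂ)^(2*n+1 : ℕ)))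
      (Ioi 0) := by
  have hs : (-1 : ℝ) < a.re + (2*n+1 : ℕ) := by
    push_cast
    have : (0:ℝ) ≤ 2*n := by positivity
    linarith
  have hbound := (integrableOn_rpow_mul_exp_neg_mul_sq one_pos hs).const_mul ‖c‖
  refine Integrable.mono' hbound ?_ ?_
  · refine ContinuousOn.aestronglyMeasurable ?_ measurableSet_Ioi
    exact (continuousOn_const.mul (((cpowIoiCont a).mul
      ((Complex.continuous_ofReal.comp (continuous_neg.comp (continuous_pow 2)).rexp).continuousOn)).mul
      ((Complex.continuous_ofReal.pow _).continuousOn)))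
  · apply (ae_restrict_iff' measurableSet_Ioi).mpr
    filter_upwards with t ht
    rw [term_norm a c n t ht]

lemma term_norm_integral (a : ℂ) (ha : -2 < a.re) (c : ℂ) (n : ℕ) :
    ∫ t in Ioi (0:ℝ), ‖c * ((t:ℂ)^a * (Real.exp (-t^2) : ℂ) * (t:ℂ)^(2*n+1 : ℕ))‖
      = ‖c‖ * Real.Gamma (a.re/2 + 1 + n) / 2 := by
  rw [setIntegral_congr_fun measurableSet_Ioi
    (fun t ht => term_norm a c n t ht)]
  rw [integral_const_mul]
  have hs : (-1 : ℝ) < a.re + (2*n+1 : ℕ) := by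
    push_cast; have : (0:ℝ) ≤ 2*n := by positivity
    linarith
  have key : ∫ t in Ioi (0:ℝ), t ^ (a.re + (2*n+1 : ℕ)) * Real.exp (-1 * t^2)
      = Real.Gamma (a.re/2 + 1 + n) / 2 := by
    have h2 := integral_rpow_mul_exp_neg_rpow (p := 2) two_pos hs
    rw [show ∫ t in Ioi (0:ℝ), t ^ (a.re + (2*n+1 : ℕ)) * Real.exp (-1 * t^2)
        = ∫ t in Ioi (0:ℝ), t ^ (a.re + (2*n+1 : ℕ)) * Real.exp (-t ^ (2:ℝ)) from
      setIntegral_congr_fun measurableSet_Ioi (fun t ht => by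
        rw [neg_one_mul, ← Real.rpow_natCast t 2]; norm_num), h2]
    rw [show (a.re + (2*n+1 : ℕ) + 1)/2 = a.re/2 + 1 + n by push_cast; ring]
    ring
  rw [key]
  ring

lemma swap_lemma (a : ℂ) (ha : -2 < a.re) (c : ℕ → ℂ)
    (hc : Summable fun n : ℕ => ‖c n‖ * Real.Gamma (a.re/2 + 1 + n)) :
    ∫ t in Ioi (0:ℝ), (t:ℂ)^a * (Real.exp (-t^2) : ℂ) * ∑' n : ℕ, c n * (t:ℂ)^(2*n+1 : ℕ)
      = ∑' n : ℕ, c n * (Complex.Gamma (a/2 + 1 + n) / 2) := by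
  set F : ℕ → ℝ → ℂ := fun n t => c n * ((t:ℂ)^a * (Real.exp (-t^2) : ℂ) * (t:ℂ)^(2*n+1 : ℕ))
    with hF
  have hint : ∀ n, Integrable (F n) (volume.restrict (Ioi 0)) := fun n =>
    term_integrable a ha (c n) n
  have hsum : Summable fun n => ∫ t in Ioi (0:ℝ), ‖F n t‖ := by
    apply ((hc.div_const 2).congr)
    intro n
    rw [term_norm_integral a ha (c n) n]
  have hswap := integral_tsum_of_summable_integral_norm hint hsum
  have heq1 : ∫ t in Ioi (0:ℝ), (t:ℂ)^a * (Real.exp (-t^2) : ℂ) * ∑' n : ℕ, c n * (t:ℂ)^(2*n+1 : ℕ)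
      = ∫ t in Ioi (0:ℝ), ∑' n : ℕ, F n t := by
    refine setIntegral_congr_fun measurableSet_Ioi (fun t ht => ?_)
    rw [← tsum_mul_left]
    exact tsum_congr fun n => by rw [hF]; ring
  rw [heq1, ← hswap]
  refine tsum_congr fun n => ?_
  have hval : ∫ t in Ioi (0:ℝ), F n t
      = c n * (Complex.Gamma (a/2 + 1 + n) / 2) := by
    have hcong : ∀ t ∈ Ioi (0:ℝ), F n t
        = c n * ((t:ℂ)^(a + 2*n + 2 - 1) * (Real.exp (-t^2) : ℂ)) := by
      intro t ht
      have htne : (t:ℂ) ≠ 0 := by exact_mod_cast (ne_of_gt ht)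
      rw [hF]
      have : (t:ℂ)^(a + 2*n + 2 - 1) = (t:ℂ)^a * (t:ℂ)^(2*n+1 : ℕ) := by
        rw [← Complex.cpow_natCast, ← Complex.cpow_add _ _ htne]
        congr 1
        push_cast
        ring
      rw [this]
      ring
    rw [setIntegral_congr_fun measurableSet_Ioi hcong, integral_const_mul,
      gauss_cpow (a + 2*n + 2) (by
        have h1 : (a + 2*(n:ℂ) + 2).re = a.re + 2*(n:ℝ) + 2 := by simp
        have h2 : (0:ℝ) ≤ (n:ℝ) := n.cast_nonneg
        rw [h1]; linarith)]
    congr 2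
    push_cast
    ring
  rw [hval]

lemma summable_aux {r b : ℝ} (hr : 0 ≤ r) (hb : 0 < b) :
    Summable (fun n : ℕ => r^(2*n+1) / ((2*n+1).factorial : ℝ) * Real.Gamma (b + n)) := by
  refine summable_of_ratio_norm_eventually_le (r := 1/2) (by norm_num) ?_
  have hN : ∀ᶠ n : ℕ in Filter.atTop, r^2*(b+1) ≤ (n:ℝ)+1 := by
    filter_upwards [Filter.eventually_ge_atTop (⌈r^2*(b+1)⌉₊)] with n hn
    calc r^2*(b+1) ≤ (⌈r^2*(b+1)⌉₊:ℝ) := Nat.le_ceil _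
    _ ≤ n := by exact_mod_cast hn
    _ ≤ n+1 := by linarith
  filter_upwards [hN] with n hn
  have hg : 0 < Real.Gamma (b+n) := Real.Gamma_pos_of_pos (by positivity)
  have hn0 : (0:ℝ) ≤ (n:ℝ) := n.cast_nonneg
  set fn := r^(2*n+1) / ((2*n+1).factorial : ℝ) * Real.Gamma (b + n) with hfn
  have hfn0 : 0 ≤ fn := by positivity
  have hfe : r^(2*(n+1)+1) / ((2*(n+1)+1).factorial : ℝ) * Real.Gamma (b + ((n+1:ℕ):ℝ))
      = fn * (r^2 * (b+n) / ((2*n+2)*(2*n+3))) := by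
    have h1 : (2*(n+1)+1) = (2*n+1) + 2 := by ring
    have h2 : ((2*n+1)+2).factorial = ((2*n+1).factorial) * ((2*n+2)*(2*n+3)) := by
      rw [show (2*n+1)+2 = ((2*n+2)+1) by ring, Nat.factorial_succ, Nat.factorial_succ]
      ring
    have h3 : b + ((n+1:ℕ):ℝ) = (b + n) + 1 := by push_cast; ring
    have h4 : (0:ℝ) < b + n := by positivity
    rw [h1, h2, h3, Real.Gamma_add_one (ne_of_gt h4), pow_add]
    have hfac : (0:ℝ) < ((2*n+1).factorial : ℝ) := by positivity
    rw [hfn]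
    push_cast
    field_simp
  have e1 : r^2*(b+n) ≤ ((n:ℝ)+1)*((n:ℝ)+1) := by
    nlinarith [mul_le_mul_of_nonneg_left hn (by positivity : (0:ℝ) ≤ (n:ℝ)+1),
      mul_nonneg (sq_nonneg r) (mul_nonneg hb.le hn0), sq_nonneg r]
  have hq : r^2 * (b+n) / ((2*(n:ℝ)+2)*(2*(n:ℝ)+3)) ≤ 1/2 := by
    rw [div_le_iff₀ (by positivity)]
    nlinarith [e1]
  have hq0 : 0 ≤ r^2 * (b+n) / ((2*(n:ℝ)+2)*(2*(n:ℝ)+3)) := by positivity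
  rw [Real.norm_eq_abs, Real.norm_eq_abs, hfe, abs_of_nonneg (by positivity),
    abs_of_nonneg hfn0]
  calc fn * (r^2 * (b+n) / ((2*(n:ℝ)+2)*(2*(n:ℝ)+3))) ≤ fn * (1/2) :=
        mul_le_mul_of_nonneg_left hq hfn0
  _ = 1/2 * fn := by ring

lemma norm_coeff (w : ℂ) (n : ℕ) :
    ‖w^(2*n+1) / ((2*n+1).factorial : ℂ)‖
      = ‖w‖^(2*n+1) / (((2*n+1).factorial : ℝ)) := by
  rw [norm_div, norm_pow]
  norm_num [Complex.norm_natCast]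

lemma I_eval (z w : ℂ) (hz : -2 < z.re) :
    ∫ t in Ioi (0:ℝ), (t:ℂ)^z * (Real.exp (-t^2) : ℂ) * Complex.sinh (w * t)
      = ∑' n : ℕ, w^(2*n+1) / ((2*n+1).factorial : ℂ) * (Complex.Gamma (z/2 + 1 + n) / 2) := by
  have hcong : ∀ t ∈ Ioi (0:ℝ),
      (t:ℂ)^z * (Real.exp (-t^2) : ℂ) * Complex.sinh (w * t)
      = (t:ℂ)^z * (Real.exp (-t^2) : ℂ)
          * ∑' n : ℕ, (w^(2*n+1) / ((2*n+1).factorial : ℂ)) * (t:ℂ)^(2*n+1 : ℕ) := by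
    intro t _
    congr 1
    rw [Complex.sinh_eq_tsum (w * t)]
    refine tsum_congr fun n => ?_
    rw [mul_pow]
    ring
  rw [setIntegral_congr_fun measurableSet_Ioi hcong]
  exact swap_lemma z hz _ (by
    refine (summable_aux (r := ‖w‖) (norm_nonneg w)
      (b := z.re/2 + 1) (by linarith)).congr fun n => ?_
    rw [norm_coeff])

lemma J_eval (w : ℂ) :
    ∫ t in Ioi (0:ℝ), (t:ℂ)^(-1:ℂ) * (Real.exp (-t^2) : ℂ) * Complex.sin (w * t)
      = ∑' n : ℕ, ((-1)^n * w^(2*n+1) / ((2*n+1).factorial : ℂ))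
          * (Complex.Gamma ((-1:ℂ)/2 + 1 + n) / 2) := by
  have hre : (-1:ℂ).re = -1 := by simp
  have hcong : ∀ t ∈ Ioi (0:ℝ),
      (t:ℂ)^(-1:ℂ) * (Real.exp (-t^2) : ℂ) * Complex.sin (w * t)
      = (t:ℂ)^(-1:ℂ) * (Real.exp (-t^2) : ℂ)
          * ∑' n : ℕ, ((-1)^n * w^(2*n+1) / ((2*n+1).factorial : ℂ)) * (t:ℂ)^(2*n+1 : ℕ) := by
    intro t _
    congr 1
    rw [← (Complex.hasSum_sin (w * t)).tsum_eq]
    refine tsum_congr fun n => ?_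
    rw [mul_pow]
    ring
  rw [setIntegral_congr_fun measurableSet_Ioi hcong]
  exact swap_lemma (-1) (by rw [hre]; norm_num) _ (by
    refine (summable_aux (r := ‖w‖) (norm_nonneg w)
      (b := (-1:ℂ).re/2 + 1) (by rw [hre]; norm_num)).congr fun n => ?_
    rw [norm_div, norm_mul, norm_pow, norm_pow]
    norm_num [Complex.norm_natCast])

lemma poch_succ (a : ℂ) (n : ℕ) : poch a (n+1) = poch a n * (a + n) := by
  rw [poch, poch, Finset.prod_range_succ]

lemma Gamma_poch (s : ℂ) (hs : 0 < s.re) (n : ℕ) :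
    Complex.Gamma (s + n) = Complex.Gamma s * poch s n := by
  induction n with
  | zero => simp [poch]
  | succ n ih =>
    have hne : s + n ≠ 0 := by
      intro h
      have := congrArg Complex.re h
      simp at this
      have : (0:ℝ) ≤ (n:ℝ) := n.cast_nonneg
      linarith [congrArg Complex.re h, this]
    have h1 : s + ((n+1 : ℕ):ℂ) = (s + n) + 1 := by push_cast; ring
    rw [h1, Complex.Gamma_add_one _ hne, ih, poch_succ]
    ring

lemma poch_three_half (n : ℕ) :
    poch (3/2) n * ((4:ℂ)^n * (n.factorial : ℂ)) = ((2*n+1).factorial : ℂ) := by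
  induction n with
  | zero => simp [poch]
  | succ n ih =>
    have h2 : (2*(n+1)+1).factorial = (2*n+1).factorial * ((2*n+2)*(2*n+3)) := by
      rw [show 2*(n+1)+1 = ((2*n+2)+1) by ring, Nat.factorial_succ, Nat.factorial_succ,
        show 2*n+2 = (2*n+1)+1 by ring, Nat.factorial_succ]
      ring
    rw [poch_succ, h2, Nat.factorial_succ]
    push_cast
    push_cast at ih
    linear_combination ((2*(n:ℂ)+2)*(2*(n:ℂ)+3)) * ih

lemma poch_one_half (n : ℕ) :
    poch (1/2) n * ((4:ℂ)^n * (n.factorial : ℂ)) = ((2*n).factorial : ℂ) := by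
  induction n with
  | zero => simp [poch]
  | succ n ih =>
    have h2 : (2*(n+1)).factorial = (2*n).factorial * ((2*n+1)*(2*n+2)) := by
      rw [show 2*(n+1) = ((2*n+1)+1) by ring, Nat.factorial_succ,
        show 2*n+1 = (2*n)+1 by ring, Nat.factorial_succ]
      ring
    rw [poch_succ, h2, Nat.factorial_succ]
    push_cast
    push_cast at ih
    linear_combination ((2*(n:ℂ)+1)*(2*(n:ℂ)+2)) * ih

lemma I_sum (z w : ℂ) (hz : -2 < z.re) :
    ∑' n : ℕ, w^(2*n+1) / ((2*n+1).factorial : ℂ) * (Complex.Gamma (z/2 + 1 + n) / 2)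
      = (w/2) * Complex.Gamma (1 + z/2) * hyp1F1 (1 + z/2) (3/2) (w^2/4) := by
  rw [hyp1F1, ← tsum_mul_left]
  refine tsum_congr fun n => ?_
  have hre : (0:ℝ) < (1 + z/2).re := by
    simp only [Complex.add_re, Complex.one_re, Complex.div_ofNat_re]
    linarith
  have h1 : Complex.Gamma (z/2 + 1 + n) = Complex.Gamma (1+z/2) * poch (1+z/2) n := by
    rw [show z/2+1+(n:ℂ) = (1+z/2) + n by ring]
    exact Gamma_poch _ hre n
  have h3 := poch_three_half n
  have hfac1 : (((2*n+1).factorial : ℕ) : ℂ) ≠ 0 := by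
    exact_mod_cast Nat.factorial_ne_zero _
  have hfacn : ((n.factorial : ℕ) : ℂ) ≠ 0 := by exact_mod_cast Nat.factorial_ne_zero _
  have h4 : ((4:ℂ))^n ≠ 0 := pow_ne_zero _ (by norm_num)
  have hpoch : poch (3/2) n ≠ 0 := by
    intro h
    rw [h, zero_mul] at h3
    exact hfac1 h3.symm
  have hw : w^(2*n+1) = w * (w^2)^n := by ring
  rw [h1, ← h3, hw, div_pow]
  field_simp

lemma J_sum (w : ℂ) :
    ∑' n : ℕ, ((-1)^n * w^(2*n+1) / ((2*n+1).factorial : ℂ))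
        * (Complex.Gamma ((-1:ℂ)/2 + 1 + n) / 2)
      = ((π:ℝ):ℂ)/2 * cerf (w/2) := by
  rw [cerf, show ((π:ℝ):ℂ)/2 * ((2 / (Real.sqrt π : ℂ)) * ∑' n : ℕ,
      (-1)^n * (w/2)^(2*n+1) / ((n.factorial : ℂ) * (2*n+1)))
    = ∑' n : ℕ, (((π:ℝ):ℂ)/2 * (2 / (Real.sqrt π : ℂ))) *
      ((-1)^n * (w/2)^(2*n+1) / ((n.factorial : ℂ) * (2*n+1))) from by
        rw [tsum_mul_left]; ring]
  refine tsum_congr fun n => ?_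
  have hGhalf : Complex.Gamma ((-1:ℂ)/2 + 1 + n) = (Real.sqrt π : ℂ) * poch (1/2) n := by
    rw [show (-1:ℂ)/2+1+(n:ℂ) = (1/2:ℂ) + n by ring,
      Gamma_poch _ (by norm_num) n]
    congr 1
    rw [show ((1:ℂ)/2) = (((1/2 : ℝ)):ℂ) by push_cast; ring, Complex.Gamma_ofReal,
      Real.Gamma_one_half_eq]
  have h3 := poch_one_half n
  have hfac1 : (((2*n+1).factorial : ℕ) : ℂ) ≠ 0 := by
    exact_mod_cast Nat.factorial_ne_zero _
  have hfac2 : (((2*n).factorial : ℕ) : ℂ) ≠ 0 := by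
    exact_mod_cast Nat.factorial_ne_zero _
  have hfacn : ((n.factorial : ℕ) : ℂ) ≠ 0 := by exact_mod_cast Nat.factorial_ne_zero _
  have h4 : ((4:ℂ))^n ≠ 0 := pow_ne_zero _ (by norm_num)
  have hpoch : poch (1/2) n ≠ 0 := by
    intro h
    rw [h, zero_mul] at h3
    exact hfac2 h3.symm
  have hsq : (Real.sqrt π : ℂ) ≠ 0 := by
    simp only [ne_eq, Complex.ofReal_eq_zero]
    positivity
  have hpi : ((π:ℝ):ℂ) = (Real.sqrt π : ℂ) * (Real.sqrt π : ℂ) := by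
    rw [← Complex.ofReal_mul, Real.mul_self_sqrt Real.pi_pos.le]
  have hfs : (((2*n+1).factorial : ℕ) : ℂ) = ((2*n).factorial : ℂ) * (2*n+1) := by
    rw [show 2*n+1 = (2*n)+1 from rfl, Nat.factorial_succ]
    push_cast
    ring
  have h21 : ((2:ℂ)*n+1) ≠ 0 := by
    intro h
    have := congrArg Complex.re h
    push_cast at this
    have h0 : (0:ℝ) ≤ (n:ℝ) := n.cast_nonneg
    simp at this
    linarith
  have hw : (w/2)^(2*n+1) = w^(2*n+1) / (2 * 4^n) := by
    rw [div_pow, show (2:ℂ)^(2*n+1) = 2 * 4^n from by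
      rw [pow_succ', pow_mul]; norm_num]
  rw [hGhalf, hfs, ← h3, hw, hpi]
  obtain ⟨m, hm0, hmeq⟩ : ∃ m : ℂ, m ≠ 0 ∧ m = 2*(n:ℂ)+1 := ⟨_, h21, rfl⟩
  rw [← hmeq]
  field_simp [hpoch, hfacn, h4, hm0, hsq]

/-- For `Re(z) > −2` and complex `w`,
`∫₀^∞∫₀^∞ u^z v^z e^{−v²(u²+1)} sin(wv) sinh(wuv) du dv
  = (πw/4) Γ(1+z/2) erf(w/2) ₁F₁(1+z/2;3/2;w²/4)`. -/
theorem double_integral_sin_sinh (z w : ℂ) (hz : -2 < z.re) :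
    ∫ v in Ioi (0:ℝ), ∫ u in Ioi (0:ℝ),
        (u:ℂ)^z * (v:ℂ)^z * (Real.exp (-v^2*(u^2+1)) : ℂ) *
          Complex.sin (w * v) * Complex.sinh (w * u * v)
      = ((π:ℂ) * w / 4) * Complex.Gamma (1 + z/2) * cerf (w/2) *
        hyp1F1 (1 + z/2) (3/2) (w^2/4) := by
  set g : ℝ → ℂ := fun t => (t:ℂ)^z * (Real.exp (-t^2) : ℂ) * Complex.sinh (w * t) with hg
  set Iint : ℂ := ∫ t in Ioi (0:ℝ), g t with hI
  set Jint : ℂ := ∫ t in Ioi (0:ℝ),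
    (t:ℂ)^(-1:ℂ) * (Real.exp (-t^2) : ℂ) * Complex.sin (w * t) with hJ
  have inner_eq : ∀ v ∈ Ioi (0:ℝ),
      (∫ u in Ioi (0:ℝ), (u:ℂ)^z * (v:ℂ)^z * (Real.exp (-v^2*(u^2+1)) : ℂ) *
          Complex.sin (w * v) * Complex.sinh (w * u * v))
      = Iint * ((v:ℂ)^(-1:ℂ) * (Real.exp (-v^2) : ℂ) * Complex.sin (w * v)) := by
    intro v hv
    have hv0 : (0:ℝ) < v := hv
    have step1 : (∫ u in Ioi (0:ℝ), (u:ℂ)^z * (v:ℂ)^z * (Real.exp (-v^2*(u^2+1)) : ℂ) *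
          Complex.sin (w * v) * Complex.sinh (w * u * v))
        = ∫ u in Ioi (0:ℝ),
            ((Real.exp (-v^2) : ℂ) * Complex.sin (w * v)) * g (u * v) := by
      refine setIntegral_congr_fun measurableSet_Ioi (fun u hu => ?_)
      have hu0 : (0:ℝ) < u := hu
      have huv : ((u*v : ℝ):ℂ)^z = (u:ℂ)^z * (v:ℂ)^z := by
        push_cast
        exact Complex.mul_cpow_ofReal_nonneg hu0.le hv0.le z
      have hexp : Real.exp (-v^2*(u^2+1)) = Real.exp (-(u*v)^2) * Real.exp (-v^2) := by
        rw [← Real.exp_add]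
        congr 1
        ring
      have harg : w * ((u*v : ℝ):ℂ) = w * u * v := by push_cast; ring
      rw [hg]
      simp only []
      rw [huv, hexp, harg]
      push_cast
      ring
    rw [step1, integral_const_mul]
    have step2 : (∫ u in Ioi (0:ℝ), g (u * v)) = v⁻¹ • ∫ t in Ioi (0:ℝ), g t := by
      have h := integral_comp_mul_right_Ioi g 0 hv0
      rw [zero_mul] at h
      exact h
    rw [step2, ← hI]
    rw [Complex.real_smul, Complex.cpow_neg_one]
    push_cast
    ring
  rw [setIntegral_congr_fun measurableSet_Ioi inner_eq, integral_const_mul, ← hJ]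
  have hIval : Iint = (w/2) * Complex.Gamma (1 + z/2) * hyp1F1 (1 + z/2) (3/2) (w^2/4) := by
    rw [hI, hg, I_eval z w hz, I_sum z w hz]
  have hJval : Jint = ((π:ℝ):ℂ)/2 * cerf (w/2) := by
    rw [hJ, J_eval w, J_sum w]
  rw [hIval, hJval]
  ring
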